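/- Let A be a commutative Noetherian ring and let y ∈ A be a nonzerodivisor contained in the Jacobson radical of A. If A/yA is an integrally closed domain, then A is an integrally closed domain. -/

import Mathlib

section SeydiAux
universe u


variable {A : Type u} [CommRing A]

/-- If `y` is prime and doesn't divide `s`, then `y^k ∣ s*a → y^k ∣ a`. -/
lemma seydi_pow_dvd (y s : A) (hy : Prime y) (hynzd : y ∈ nonZeroDivisors A)
    (hs : ¬ y ∣ s) : ∀ (k : ℕ) (a : A), y ^ k ∣ s * a → y ^ k ∣ a := by
  intro k
  induction k with
  | zero => intro a _; simp
  | succ k ih =>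
    intro a ha
    have h1 : y ∣ s * a := dvd_trans (dvd_pow_self y (Nat.succ_ne_zero k)) ha
    rcases hy.dvd_mul.mp h1 with h | h
    · exact absurd h hs
    obtain ⟨a', rfl⟩ := h
    obtain ⟨c, hc⟩ := ha
    have hc' : y * (s * a') = y * (y ^ k * c) := by ring_nf; ring_nf at hc; linear_combination hc
    have : s * a' = y ^ k * c := (mul_cancel_left_mem_nonZeroDivisors hynzd).mp hc'
    obtain ⟨d, hd⟩ := ih a' ⟨c, this⟩
    exact ⟨d, by rw [pow_succ, hd]; ring⟩

variable [IsNoetherianRing A]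

/-- Krull intersection theorem, Jacobson-radical version. -/
lemma seydi_krull (y : A) (hyJ : y ∈ Ideal.jacobson (⊥ : Ideal A))
    (M : Type u) [AddCommGroup M] [Module A M] [Module.Finite A M] (x : M)
    (hx : ∀ n : ℕ, x ∈ (Ideal.span {y} ^ n • ⊤ : Submodule A M)) : x = 0 := by
  have hmem : x ∈ (⨅ i : ℕ, Ideal.span {y} ^ i • ⊤ : Submodule A M) := by
    rw [Submodule.mem_iInf]; exact hx
  obtain ⟨r, hr⟩ := (Ideal.mem_iInf_smul_pow_eq_bot_iff (Ideal.span {y}) x).mp hmem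
  have hrj : (r : A) ∈ Ideal.jacobson (⊥ : Ideal A) :=
    Ideal.span_le.mpr (Set.singleton_subset_iff.mpr hyJ) r.2
  have hu : IsUnit (1 - (r : A)) := by
    have := Ideal.mem_jacobson_bot.mp hrj (-1)
    simpa [sub_eq_add_neg, add_comm] using this
  have h0 : (1 - (r : A)) • x = 0 := by rw [sub_smul, one_smul, hr, sub_self]
  calc x = hu.unit⁻¹ • ((1 - (r : A)) • x) := by
        rw [← smul_assoc, Units.smul_def]
        norm_num [IsUnit.unit_spec]
    _ = 0 := by rw [h0, smul_zero]

omit [IsNoetherianRing A] in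
lemma seydi_factor (y : A) (hP : (Ideal.span {y} : Ideal A).IsPrime) :
    ∀ (n : ℕ) (a : A), a ∉ Ideal.span {y} ^ n →
      ∃ (m : ℕ) (a' : A), a = y ^ m * a' ∧ a' ∉ Ideal.span {y} := by
  intro n
  induction n with
  | zero => intro a ha; exact absurd (by simp) ha
  | succ n ih =>
    intro a ha
    by_cases h : a ∈ Ideal.span ({y} : Set A)
    · obtain ⟨a₁, rfl⟩ := Ideal.mem_span_singleton'.mp h
      have ha₁ : a₁ ∉ Ideal.span {y} ^ n := by
        intro hmem
        exact ha (by rw [pow_succ]; exact Ideal.mul_mem_mul hmem (Ideal.mem_span_singleton_self y))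
      obtain ⟨m, a', h1, h2⟩ := ih a₁ ha₁
      exact ⟨m + 1, a', by rw [h1]; ring, h2⟩
    · exact ⟨0, a, by ring, h⟩

lemma seydi_isDomain [Nontrivial A] (y : A) (hynzd : y ∈ nonZeroDivisors A)
    (hyJ : y ∈ Ideal.jacobson (⊥ : Ideal A))
    (hP : (Ideal.span {y} : Ideal A).IsPrime) : IsDomain A := by
  have key : ∀ a : A, a ≠ 0 → ∃ (m : ℕ) (a' : A), a = y ^ m * a' ∧ a' ∉ Ideal.span {y} := by
    intro a ha
    have : ∃ n : ℕ, a ∉ Ideal.span {y} ^ n := by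
      by_contra h
      push_neg at h
      exact ha (seydi_krull y hyJ A a (fun n => by
        simpa [Ideal.smul_eq_mul, Ideal.mul_top] using h n))
    obtain ⟨n, hn⟩ := this
    exact seydi_factor y hP n a hn
  have : NoZeroDivisors A := by
    constructor
    intro a b hab
    by_contra h
    push_neg at h
    obtain ⟨ha, hb⟩ := h
    obtain ⟨m, a', ha', ha''⟩ := key a ha
    obtain ⟨k, b', hb', hb''⟩ := key b hb
    have h0 : y ^ (m + k) * (a' * b') = 0 := by
      rw [pow_add]; rw [ha', hb'] at hab; linear_combination hab
    have : a' * b' = 0 := by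
      have hy : y ^ (m+k) ∈ nonZeroDivisors A := pow_mem hynzd _
      exact (mul_cancel_left_mem_nonZeroDivisors hy).mp (by rw [h0, mul_zero])
    have : a' * b' ∈ Ideal.span ({y} : Set A) := this ▸ (Ideal.span {y}).zero_mem
    rcases hP.mem_or_mem this with h | h
    · exact ha'' h
    · exact hb'' h
  exact NoZeroDivisors.to_isDomain A



lemma seydi_loc_icl {A : Type u} [CommRing A] [IsDomain A] [IsNoetherianRing A]
    (y : A) (hP : (Ideal.span {y} : Ideal A).IsPrime) :
    IsIntegrallyClosed (Localization.AtPrime (Ideal.span {y})) := by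
  set P : Ideal A := Ideal.span {y} with hPdef
  haveI : P.IsPrime := hP
  haveI : IsNoetherianRing (Localization.AtPrime P) :=
    IsLocalization.isNoetherianRing P.primeCompl _ inferInstance
  have hprinc : (IsLocalRing.maximalIdeal (Localization.AtPrime P)).IsPrincipal := by
    refine ⟨algebraMap A (Localization.AtPrime P) y, ?_⟩
    rw [← Localization.AtPrime.map_eq_maximalIdeal]
    show Ideal.map (algebraMap A (Localization.AtPrime P)) (Ideal.span {y}) = _
    rw [Ideal.map_span, Set.image_singleton]
  have hPIR : IsPrincipalIdealRing (Localization.AtPrime P) :=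
    ((tfae_of_isNoetherianRing_of_isLocalRing_of_isDomain (Localization.AtPrime P)).out 4 0).mp
      hprinc
  infer_instance

/-- denominator lemma -/
lemma seydi_denom {A : Type u} [CommRing A] [IsDomain A] [IsNoetherianRing A]
    (y : A) (hP : (Ideal.span {y} : Ideal A).IsPrime)
    (x : FractionRing A) (hx : IsIntegral A x) :
    ∃ a s : A, s ∉ Ideal.span {y} ∧ algebraMap A (FractionRing A) s * x
      = algebraMap A (FractionRing A) a := by
  set P : Ideal A := Ideal.span {y} with hPdef
  haveI : P.IsPrime := hP
  haveI := seydi_loc_icl y hP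
  have hx' : IsIntegral (Localization.AtPrime P) x :=
    IsIntegral.tower_top (A := Localization.AtPrime P) hx
  obtain ⟨r, hr⟩ := IsIntegrallyClosed.isIntegral_iff.mp hx'
  obtain ⟨a, s, hmk⟩ := IsLocalization.exists_mk'_eq P.primeCompl r
  refine ⟨a, s, s.2, ?_⟩
  have hspec := IsLocalization.mk'_spec (Localization.AtPrime P) a s
  rw [hmk] at hspec
  have := congrArg (algebraMap (Localization.AtPrime P) (FractionRing A)) hspec
  rw [map_mul, hr, ← IsScalarTower.algebraMap_apply, ← IsScalarTower.algebraMap_apply] at this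
  rw [mul_comm]
  exact this

lemma seydi_common_denom {A : Type u} {K : Type*} [CommRing A] [CommRing K] [Algebra A K]
    (P : Ideal A) (hP : P.IsPrime) (T : Finset K)
    (h : ∀ t ∈ T, ∃ s ∉ P, ∃ c : A, algebraMap A K s * t = algebraMap A K c) :
    ∃ s ∉ P, ∀ t ∈ T, ∃ c : A, algebraMap A K s * t = algebraMap A K c := by
  classical
  induction T using Finset.induction_on with
  | empty =>
    refine ⟨1, fun h1 => hP.ne_top ((Ideal.eq_top_iff_one P).mpr h1), by simp⟩
  | @insert a T ha ih =>
    obtain ⟨s₁, hs₁, c₁, hc₁⟩ := h a (Finset.mem_insert_self a T)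
    obtain ⟨s₂, hs₂, hall⟩ := ih (fun t ht => h t (Finset.mem_insert_of_mem ht))
    refine ⟨s₁ * s₂, fun hm => (hP.mem_or_mem hm).elim hs₁ hs₂, ?_⟩
    intro t ht
    rcases Finset.mem_insert.mp ht with rfl | ht
    · exact ⟨s₂ * c₁, by rw [map_mul, map_mul, mul_comm (algebraMap A K s₁),
        mul_assoc, hc₁]⟩
    · obtain ⟨c₂, hc₂⟩ := hall t ht
      exact ⟨s₁ * c₂, by rw [map_mul, map_mul, mul_assoc, hc₂]⟩

lemma seydi_icl {A : Type u} [CommRing A] [IsDomain A] [IsNoetherianRing A]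
    (y : A) (hynzd : y ∈ nonZeroDivisors A) (hyJ : y ∈ Ideal.jacobson (⊥ : Ideal A))
    (hP : (Ideal.span {y} : Ideal A).IsPrime)
    (hicl : IsIntegrallyClosed (A ⧸ Ideal.span {y})) :
    IsIntegrallyClosed A := by
  rw [isIntegrallyClosed_iff (FractionRing A)]
  intro x hx
  set ι := algebraMap A (FractionRing A) with hι
  have hιinj : Function.Injective ι := IsFractionRing.injective A (FractionRing A)
  have hy0 : y ≠ 0 := mem_nonZeroDivisors_iff_ne_zero.mp hynzd
  have hyprime : Prime y := (Ideal.span_singleton_prime hy0).mp hP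
  have hBfg : (Subalgebra.toSubmodule (Algebra.adjoin A ({x} : Set (FractionRing A)))).FG :=
    hx.fg_adjoin_singleton
  set B := Algebra.adjoin A ({x} : Set (FractionRing A)) with hB
  have hBint : ∀ z ∈ B, IsIntegral A z := fun z hz => IsIntegral.of_mem_of_fg B hBfg z hz
  obtain ⟨T, hT⟩ := hBfg
  -- common denominator s ∉ (y)
  obtain ⟨s, hs, hsT⟩ := seydi_common_denom (Ideal.span {y}) hP T (fun t ht => by
    have htB : t ∈ B := by
      rw [← Subalgebra.mem_toSubmodule, ← hT]
      exact Submodule.subset_span ht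
    obtain ⟨a, s, hs, heq⟩ := seydi_denom y hP t (hBint t htB)
    exact ⟨s, hs, a, heq⟩)
  have hsden : ∀ z ∈ B, ∃ c : A, ι s * z = ι c := by
    intro z hz
    have hz' : z ∈ Submodule.span A (T : Set (FractionRing A)) := by
      rw [hT]; exact hz
    clear hz
    induction hz' using Submodule.span_induction with
    | mem t ht => exact hsT t ht
    | zero => exact ⟨0, by simp⟩
    | add u v hu hv ihu ihv =>
      obtain ⟨c, hc⟩ := ihu
      obtain ⟨d, hd⟩ := ihv
      exact ⟨c + d, by rw [map_add, mul_add, hc, hd]⟩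
    | smul a u hu ihu =>
      obtain ⟨c, hc⟩ := ihu
      refine ⟨a * c, ?_⟩
      rw [map_mul, Algebra.smul_def, ← hc]; ring
  -- the ideal of numerators
  set D : Ideal A := Submodule.comap (Algebra.linearMap A (FractionRing A))
    (Submodule.map (LinearMap.mul A (FractionRing A) (ι s)) (Subalgebra.toSubmodule B)) with hD
  have hDmem : ∀ c : A, c ∈ D ↔ ∃ z ∈ B, ι s * z = ι c := by
    intro c
    simp only [hD, Submodule.mem_comap, Submodule.mem_map, Subalgebra.mem_toSubmodule,
      LinearMap.mul_apply', Algebra.linearMap_apply]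
    exact Iff.rfl
  -- the stabilized saturation E of D
  have hmono : Monotone (fun j : ℕ => D.colon (Ideal.span {y ^ j})) := by
    apply monotone_nat_of_le_succ
    intro j c hc
    rw [Ideal.mem_colon_span_singleton] at hc ⊢
    rw [show c * y ^ (j + 1) = y * (c * y ^ j) by ring]
    exact Ideal.mul_mem_left _ y hc
  obtain ⟨j₀, hj₀⟩ := monotone_stabilizes_iff_noetherian.mpr inferInstance
    ⟨fun j : ℕ => D.colon (Ideal.span {y ^ j}), hmono⟩
  set E : Ideal A := D.colon (Ideal.span {y ^ j₀}) with hE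
  have hE_of : ∀ (k : ℕ) (c : A), y ^ k * c ∈ D → c ∈ E := by
    intro k c hc
    have hck : c ∈ D.colon (Ideal.span {y ^ k}) :=
      Ideal.mem_colon_span_singleton.mpr (by rwa [mul_comm])
    rcases le_total k j₀ with h | h
    · exact hmono h hck
    · have heq : D.colon (Ideal.span {y ^ j₀}) = D.colon (Ideal.span {y ^ k}) := hj₀ k h
      show c ∈ D.colon (Ideal.span {y ^ j₀})
      rw [heq]; exact hck
  have hsD : s ∈ D := (hDmem s).mpr ⟨1, Subalgebra.one_mem B, by rw [mul_one]⟩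
  have hsE : s ∈ E := hE_of 0 s (by simpa using hsD)
  have hxB : x ∈ B := Algebra.self_mem_adjoin_singleton A x
  obtain ⟨c₀, hc₀⟩ := hsden x hxB
  have hc₀D : c₀ ∈ D := (hDmem c₀).mpr ⟨x, hxB, hc₀⟩
  have hnds : ¬ y ∣ s := fun hd => hs (Ideal.mem_span_singleton.mpr hd)
  -- multiplicativity: E * E ⊆ s * E
  have hmulE : ∀ c ∈ E, ∀ d ∈ E, ∃ f ∈ E, c * d = s * f := by
    intro c hc d hd
    obtain ⟨z, hzB, hz⟩ := (hDmem _).mp (Ideal.mem_colon_span_singleton.mp hc)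
    obtain ⟨z', hzB', hz'⟩ := (hDmem _).mp (Ideal.mem_colon_span_singleton.mp hd)
    obtain ⟨h, hh⟩ := hsden (z * z') (mul_mem hzB hzB')
    have key : y ^ (j₀ + j₀) * (c * d) = s * h := by
      apply hιinj
      have h1 : ι (y ^ (j₀ + j₀) * (c * d)) = ι (c * y ^ j₀) * ι (d * y ^ j₀) := by
        rw [← map_mul]; congr 1; rw [pow_add]; ring
      have h3 : (ι s * z) * (ι s * z') = ι s * ι h := by rw [← hh]; ring
      rw [h1, ← hz, ← hz', h3, ← map_mul]
    obtain ⟨f, hf⟩ := seydi_pow_dvd y s hyprime hynzd hnds (j₀ + j₀) h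
      ⟨c * d, by rw [← key]⟩
    refine ⟨f, ?_, ?_⟩
    · apply hE_of (j₀ + j₀)
      rw [← hf]
      exact (hDmem h).mpr ⟨z * z', mul_mem hzB hzB', hh⟩
    · have heq2 : y ^ (j₀ + j₀) * (c * d) = y ^ (j₀ + j₀) * (s * f) := by
        rw [key, hf]; ring
      exact (mul_cancel_left_mem_nonZeroDivisors (pow_mem hynzd _)).mp heq2
  -- key lemma: every element of E is congruent to a multiple of s mod (y)
  have hKL : ∀ e ∈ E, ∃ t : A, e - s * t ∈ Ideal.span {y} := by
    intro e heE
    haveI : IsDomain (A ⧸ (Ideal.span {y} : Ideal A)) :=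
      (Ideal.Quotient.isDomain_iff_prime _).mpr hP
    set π : A →+* A ⧸ (Ideal.span {y} : Ideal A) := Ideal.Quotient.mk (Ideal.span {y}) with hπ
    set ιk := algebraMap (A ⧸ (Ideal.span {y} : Ideal A))
      (FractionRing (A ⧸ (Ideal.span {y} : Ideal A))) with hιk
    have hπs : π s ≠ 0 := fun h0 => hs (Ideal.Quotient.eq_zero_iff_mem.mp h0)
    have hιks : ιk (π s) ≠ 0 := fun h0 => hπs (IsFractionRing.to_map_eq_zero_iff.mp h0)
    set Ebar : Ideal (A ⧸ (Ideal.span {y} : Ideal A)) := Ideal.map π E with hEbar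
    set N := Submodule.map (Algebra.linearMap (A ⧸ (Ideal.span {y} : Ideal A))
      (FractionRing (A ⧸ (Ideal.span {y} : Ideal A)))) Ebar with hN
    have hNfg : N.FG := (IsNoetherian.noetherian Ebar).map _
    have hNne : N ≠ ⊥ := by
      rw [Submodule.ne_bot_iff]
      exact ⟨ιk (π s), ⟨π s, Ideal.mem_map_of_mem π hsE, rfl⟩, hιks⟩
    set w := ιk (π e) / ιk (π s) with hw
    have hstab : ∀ n ∈ N, w • n ∈ N := by
      rintro n ⟨abar, habar, rfl⟩
      obtain ⟨d, hdE, rfl⟩ := Ideal.mem_map_iff_of_surjective π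
        Ideal.Quotient.mk_surjective |>.mp habar
      obtain ⟨f, hfE, hf⟩ := hmulE e heE d hdE
      have hcalc : w • (Algebra.linearMap _ _) (π d) = ιk (π f) := by
        show w * ιk (π d) = ιk (π f)
        rw [hw, div_mul_eq_mul_div, ← map_mul, ← map_mul, hf, map_mul, map_mul,
          mul_div_cancel_left₀ _ hιks]
      rw [hcalc]
      exact ⟨π f, Ideal.mem_map_of_mem π hfE, rfl⟩
    have hwint : IsIntegral (A ⧸ (Ideal.span {y} : Ideal A)) w :=
      isIntegral_of_smul_mem_submodule N hNne hNfg w hstab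
    obtain ⟨tbar, htbar⟩ := IsIntegrallyClosed.isIntegral_iff.mp hwint
    obtain ⟨t, rfl⟩ := Ideal.Quotient.mk_surjective tbar
    refine ⟨t, ?_⟩
    have hmain : ιk (π (s * t)) = ιk (π e) := by
      rw [map_mul, map_mul]
      show ιk (π s) * ιk (π t) = ιk (π e)
      rw [htbar, hw, mul_comm, div_mul_cancel₀ _ hιks]
    have h2 : π (s * t) = π e :=
      IsFractionRing.injective (A ⧸ (Ideal.span {y} : Ideal A)) _ hmain
    rw [← Ideal.Quotient.eq_zero_iff_mem]
    show π (e - s * t) = 0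
    rw [map_sub, h2, sub_self]
  -- digit expansion: c₀ ∈ (s) + (y^k) for all k
  have hMC : ∀ k : ℕ, ∃ t : A, c₀ - s * t ∈ Ideal.span {y ^ k} := by
    intro k
    induction k with
    | zero => exact ⟨0, by simpa using Ideal.mem_span_singleton.mpr (one_dvd _)⟩
    | succ k ih =>
      obtain ⟨t, ht⟩ := ih
      obtain ⟨e, he⟩ := Ideal.mem_span_singleton'.mp ht
      -- he : e * y ^ k = c₀ - s * t
      have heD : y ^ k * e ∈ D := by
        rw [show y ^ k * e = c₀ - s * t by rw [← he]; ring]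
        exact Submodule.sub_mem D hc₀D (Ideal.mul_mem_right t D hsD)
      obtain ⟨t', ht'⟩ := hKL e (hE_of k e heD)
      obtain ⟨p, hp⟩ := Ideal.mem_span_singleton'.mp ht'
      refine ⟨t + y ^ k * t', Ideal.mem_span_singleton'.mpr ⟨p, ?_⟩⟩
      rw [pow_succ]
      linear_combination he + y ^ k * hp
  -- Krull intersection in A ⧸ (s) forces s ∣ c₀
  have hsdvd : c₀ ∈ Ideal.span ({s} : Set A) := by
    rw [← Submodule.Quotient.mk_eq_zero (Ideal.span ({s} : Set A) : Submodule A A)]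
    apply seydi_krull y hyJ (A ⧸ (Ideal.span ({s} : Set A) : Submodule A A))
    intro n
    obtain ⟨t, ht⟩ := hMC n
    obtain ⟨e', he'⟩ := Ideal.mem_span_singleton'.mp ht
    have hmk : (Submodule.Quotient.mk c₀ : A ⧸ (Ideal.span ({s} : Set A) : Submodule A A))
        = y ^ n • Submodule.Quotient.mk e' := by
      rw [← Submodule.Quotient.mk_smul, Submodule.Quotient.eq]
      refine Ideal.mem_span_singleton'.mpr ⟨t, ?_⟩
      rw [smul_eq_mul]
      linear_combination he'
    rw [hmk]
    exact Submodule.smul_mem_smul (Ideal.pow_mem_pow (Ideal.mem_span_singleton_self y) n)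
      trivial
  obtain ⟨t₀, ht₀⟩ := Ideal.mem_span_singleton'.mp hsdvd
  -- conclude x = ι t₀
  have hs0 : s ≠ 0 := fun h0 => hs (h0 ▸ (Ideal.span {y}).zero_mem)
  have hιs0 : ι s ≠ 0 := fun h0 => hs0 (hιinj (by rw [h0, map_zero]))
  refine ⟨t₀, ?_⟩
  apply mul_left_cancel₀ hιs0
  rw [hc₀, ← ht₀, map_mul]
  ring

end SeydiAux

/-- **Seydi's theorem** (Statement 2): let `A` be a Noetherian ring and `y` a nonzerodivisor
contained in the Jacobson radical of `A`. If `A/yA` is an integrally closed domain, then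
`A` is an integrally closed domain. -/
theorem isIntegrallyClosed_domain_of_quotient_span_singleton
    (A : Type*) [CommRing A] [IsNoetherianRing A]
    (y : A) (hynzd : y ∈ nonZeroDivisors A) (hyJ : y ∈ Ideal.jacobson (⊥ : Ideal A))
    (hdom : IsDomain (A ⧸ Ideal.span {y}))
    (hicl : IsIntegrallyClosed (A ⧸ Ideal.span {y})) :
    IsDomain A ∧ IsIntegrallyClosed A := by
  haveI : Nontrivial (A ⧸ Ideal.span {y}) := hdom.toNontrivial
  haveI : Nontrivial A := (Ideal.Quotient.mk (Ideal.span {y})).domain_nontrivial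
  have hP : (Ideal.span {y} : Ideal A).IsPrime := (Ideal.Quotient.isDomain_iff_prime _).mp hdom
  haveI hdomA : IsDomain A := seydi_isDomain y hynzd hyJ hP
  exact ⟨hdomA, seydi_icl y hynzd hyJ hP hicl⟩
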